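/- Fix an integer $N \geq 2$ and let $\theta_j = \frac{2\pi j}{N}$. For each integer $m \geq 0$, the quantity $\sum_{j=1}^{N} \left(\cos^m(\theta_j - \tfrac{\pi}{N}) - \cos^m \theta_j\right)$ is nonpositive. -/

import Mathlib

open Real Complex Finset

-- geometric sum of roots of unity
lemma geom_aux (N : ℕ) (hN : 1 ≤ N) (l : ℤ) :
    ∑ j ∈ Finset.Icc 1 N, Complex.exp ((l : ℂ) * (2 * π * j / N) * Complex.I)
      = if (N : ℤ) ∣ l then (N : ℂ) else 0 := by
  have hN0 : (N : ℂ) ≠ 0 := Nat.cast_ne_zero.mpr (by omega)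
  set ζ : ℂ := Complex.exp ((l : ℂ) * (2 * π / N) * Complex.I) with hζ
  have hterm : ∀ j : ℕ, Complex.exp ((l : ℂ) * (2 * π * j / N) * Complex.I) = ζ ^ j := by
    intro j
    rw [hζ, ← Complex.exp_nat_mul]
    congr 1
    push_cast
    ring
  rw [Finset.sum_congr rfl fun j _ => hterm j]
  by_cases hdvd : (N : ℤ) ∣ l
  · obtain ⟨t, ht⟩ := hdvd
    have hζ1 : ζ = 1 := by
      rw [hζ, ht]
      have : ((N * t : ℤ) : ℂ) * (2 * π / N) * Complex.I = (t : ℤ) * (2 * π * Complex.I) := by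
        push_cast
        field_simp
      rw [this, Complex.exp_int_mul_two_pi_mul_I]
    rw [if_pos ⟨t, ht⟩]
    simp [hζ1, Nat.card_Icc]
  · have hζn1 : ζ ≠ 1 := by
      intro h
      rw [hζ, Complex.exp_eq_one_iff] at h
      obtain ⟨n, hn⟩ := h
      have hπ : (π : ℂ) ≠ 0 := by exact_mod_cast Real.pi_ne_zero
      have hl : (l : ℂ) = n * N := by
        field_simp at hn
        have h2 : (2 : ℂ) * π * Complex.I ≠ 0 := by
          simp [hπ, Complex.I_ne_zero]
        apply mul_right_cancel₀ h2
        linear_combination (2 * (π : ℂ) * Complex.I) * hn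
      have : l = n * N := by exact_mod_cast hl
      exact hdvd ⟨n, by linarith⟩
    have hζN : ζ ^ N = 1 := by
      rw [hζ, ← Complex.exp_nat_mul]
      have : (N : ℂ) * ((l : ℂ) * (2 * π / N) * Complex.I) = (l : ℤ) * (2 * π * Complex.I) := by
        push_cast
        field_simp
      rw [this, Complex.exp_int_mul_two_pi_mul_I]
    have : ∑ j ∈ Finset.Icc 1 N, ζ ^ j = ζ * ∑ j ∈ Finset.range N, ζ ^ j := by
      rw [Finset.mul_sum, show Finset.Icc 1 N = Finset.Ico 1 (N+1) from by
        ext x; simp only [Finset.mem_Icc, Finset.mem_Ico]; omega, Finset.sum_Ico_eq_sum_range]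
      simp [pow_succ, pow_add, mul_comm]
    rw [this, geom_sum_eq hζn1, hζN]
    simp [hdvd]

lemma expand_aux (N : ℕ) (hN : 1 ≤ N) (m : ℕ) (φ : ℝ) :
    ∑ j ∈ Finset.Icc 1 N, (Complex.cos ((2 * π * j / N + φ : ℝ) : ℂ)) ^ m
      = (1/2 : ℂ) ^ m * ∑ k ∈ Finset.range (m+1),
          (m.choose k : ℂ) * Complex.exp (((2*(k:ℤ) - m : ℤ) : ℂ) * φ * Complex.I) *
            (if (N : ℤ) ∣ (2*(k:ℤ) - m) then (N : ℂ) else 0) := by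
  have step : ∀ j ∈ Finset.Icc 1 N,
      (Complex.cos ((2 * π * j / N + φ : ℝ) : ℂ)) ^ m
        = (1/2 : ℂ) ^ m * ∑ k ∈ Finset.range (m+1),
            (m.choose k : ℂ) * (Complex.exp (((2*(k:ℤ) - m : ℤ) : ℂ) * φ * Complex.I)
              * Complex.exp (((2*(k:ℤ) - m : ℤ) : ℂ) * (2 * π * j / N) * Complex.I)) := by
    intro j _
    set z : ℂ := ((2 * π * j / N + φ : ℝ) : ℂ) with hz
    rw [show Complex.cos z = (Complex.exp (z * Complex.I) + Complex.exp (-z * Complex.I)) / 2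
      from rfl]
    rw [div_pow, add_pow]
    rw [div_eq_mul_inv, ← one_div, show (1:ℂ)/2^m = (1/2)^m from by
      rw [div_pow, one_pow], mul_comm]
    congr 1
    apply Finset.sum_congr rfl
    intro k hk
    have hk' : k ≤ m := Nat.lt_succ_iff.mp (Finset.mem_range.mp hk)
    rw [← Complex.exp_nat_mul, ← Complex.exp_nat_mul, ← Complex.exp_add, ← Complex.exp_add]
    rw [mul_comm]
    congr 1
    have : ((2*(k:ℤ) - m : ℤ) : ℂ) = 2*(k:ℂ) - m := by push_cast; ring
    rw [this]
    have hmk : ((m - k : ℕ) : ℂ) = (m : ℂ) - k := by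
      push_cast [Nat.cast_sub hk']; ring
    rw [hmk, hz]
    push_cast
    ring
  rw [Finset.sum_congr rfl step, ← Finset.mul_sum]
  congr 1
  rw [Finset.sum_comm]
  apply Finset.sum_congr rfl
  intro k _
  rw [← Finset.mul_sum, ← Finset.mul_sum, geom_aux N hN (2*(k:ℤ) - m), mul_assoc, mul_assoc]

lemma term_re_nonpos (C d x : ℝ) (hC : 0 ≤ C) (hd : 0 ≤ d) :
    ((C : ℂ) * (Complex.exp ((x : ℂ) * Complex.I) - 1) * (d : ℂ)).re ≤ 0 := by
  have h1 : ((C : ℂ) * (Complex.exp ((x : ℂ) * Complex.I) - 1) * (d : ℂ)).re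
      = C * (Real.cos x - 1) * d := by
    simp [Complex.mul_re, Complex.exp_ofReal_mul_I_re, Complex.exp_ofReal_mul_I_im]
  rw [h1]
  have : Real.cos x - 1 ≤ 0 := by linarith [Real.cos_le_one x]
  have := mul_nonneg hC hd
  nlinarith

theorem stmt7 (N : ℕ) (hN : 2 ≤ N) (m : ℕ) :
    ∑ j ∈ Finset.Icc 1 N,
      (Real.cos (2 * π * j / N - π / N) ^ m - Real.cos (2 * π * j / N) ^ m) ≤ 0 := by
  have hN1 : 1 ≤ N := le_trans (by norm_num) hN
  set S : ℝ := ∑ j ∈ Finset.Icc 1 N,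
      (Real.cos (2 * π * j / N - π / N) ^ m - Real.cos (2 * π * j / N) ^ m) with hS
  have hsum : (S : ℂ)
      = (∑ j ∈ Finset.Icc 1 N, (Complex.cos ((2 * π * j / N + (-(π / N)) : ℝ) : ℂ)) ^ m)
        - (∑ j ∈ Finset.Icc 1 N, (Complex.cos ((2 * π * j / N + 0 : ℝ) : ℂ)) ^ m) := by
    rw [hS, ← Finset.sum_sub_distrib]
    push_cast [Complex.ofReal_cos]
    apply Finset.sum_congr rfl
    intro j _
    norm_num [sub_eq_add_neg]
  rw [expand_aux N hN1 m (-(π / N)), expand_aux N hN1 m 0, ← mul_sub,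
    ← Finset.sum_sub_distrib] at hsum
  have hterm : ∀ k ∈ Finset.range (m+1),
      ((m.choose k : ℂ) * Complex.exp (((2*(k:ℤ) - m : ℤ) : ℂ) * ((-(π / N) : ℝ) : ℂ) * Complex.I) *
          (if (N : ℤ) ∣ (2*(k:ℤ) - m) then (N : ℂ) else 0)
        - (m.choose k : ℂ) * Complex.exp (((2*(k:ℤ) - m : ℤ) : ℂ) * ((0 : ℝ) : ℂ) * Complex.I) *
          (if (N : ℤ) ∣ (2*(k:ℤ) - m) then (N : ℂ) else 0))
      = (m.choose k : ℂ) *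
          (Complex.exp (((((2*(k:ℤ) - m : ℤ) : ℝ) * (-(π / N)) : ℝ) : ℂ) * Complex.I) - 1) *
          (((if (N : ℤ) ∣ (2*(k:ℤ) - m) then (N : ℝ) else 0) : ℝ) : ℂ) := by
    intro k _
    have h1 : (((2*(k:ℤ) - m : ℤ) : ℂ) * ((-(π / N) : ℝ) : ℂ))
        = ((((2*(k:ℤ) - m : ℤ) : ℝ) * (-(π / N)) : ℝ) : ℂ) := by push_cast; ring
    have h2 : (if (N : ℤ) ∣ (2*(k:ℤ) - m) then (N : ℂ) else 0)
        = (((if (N : ℤ) ∣ (2*(k:ℤ) - m) then (N : ℝ) else 0) : ℝ) : ℂ) := by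
      split <;> simp
    have h3 : Complex.exp (((2*(k:ℤ) - m : ℤ) : ℂ) * ((0 : ℝ) : ℂ) * Complex.I) = 1 := by
      simp
    rw [h3, ← h2, h1]
    ring
  rw [Finset.sum_congr rfl hterm] at hsum
  have hre : S = ((1/2 : ℝ)^m) * ∑ k ∈ Finset.range (m+1),
      ((m.choose k : ℂ) *
          (Complex.exp (((((2*(k:ℤ) - m : ℤ) : ℝ) * (-(π / N)) : ℝ) : ℂ) * Complex.I) - 1) *
          (((if (N : ℤ) ∣ (2*(k:ℤ) - m) then (N : ℝ) else 0) : ℝ) : ℂ)).re := by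
    have : S = (S : ℂ).re := (Complex.ofReal_re S).symm
    rw [this, hsum]
    have h12 : ((1/2 : ℂ))^m = (((1/2 : ℝ)^m : ℝ) : ℂ) := by push_cast; ring
    rw [h12, Complex.re_ofReal_mul, Complex.re_sum]
  rw [hre]
  apply mul_nonpos_of_nonneg_of_nonpos (by positivity)
  apply Finset.sum_nonpos
  intro k _
  have hC : (0:ℝ) ≤ (m.choose k : ℝ) := Nat.cast_nonneg _
  have hd : (0:ℝ) ≤ (if (N : ℤ) ∣ (2*(k:ℤ) - m) then (N : ℝ) else 0) := by
    split <;> positivity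
  have := term_re_nonpos (m.choose k : ℝ) _ (((2*(k:ℤ) - m : ℤ) : ℝ) * (-(π / N))) hC hd
  simpa using this
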